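/- Let (R, ⊕, ≤) be a lattice ordered monoid whose order is a complete lattice, let D = (V, A) be a finite digraph with arc resources (x_a)_{a∈A} in R, fix a destination d ∈ V, and define the sequence (b^n)_{n≥0} in R^V by b^0_d = 0, b^0_v = ⊤ for v ≠ d, b^{n+1}_d = 0, and b^{n+1}_v = b^n_v ⊓ ⨅_{a=(v,u)∈δ⁺(v)} (x_a ⊕ b^n_u) for v ≠ d. Setting b^∞_v = ⨅_{n∈ℕ} b^n_v, one has for every vertex v ≠ d: ⨅_{a=(v,u)∈δ⁺(v)} (x_a ⊕ b^∞_u) ≤ b^∞_v. -/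

import Mathlib

/-- A digraph with vertex set `V` and arc set `A`: each arc has a tail and a head. -/
structure Digraph' (V A : Type*) where
  tail : A → V
  head : A → V

/-- The sequence `(bⁿ)` of the generalized Ford-Bellman algorithm:
`b⁰ d = 0`, `b⁰ v = ⊤` for `v ≠ d`, `bⁿ⁺¹ d = 0`, and
`bⁿ⁺¹ v = bⁿ v ⊓ ⨅_{a ∈ δ⁺(v)} (x a + bⁿ (head a))` for `v ≠ d`. -/
def bSeq {V A R : Type*} [DecidableEq V] [CompleteLattice R] [AddMonoid R]
    (D : Digraph' V A) (x : A → R) (d : V) : ℕ → V → R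
  | 0 => fun v => if v = d then 0 else ⊤
  | n + 1 => fun v => if v = d then 0
      else bSeq D x d n v ⊓ ⨅ a ∈ {a : A | D.tail a = v}, (x a + bSeq D x d n (D.head a))

/-- setting `b^∞ v = ⨅ₙ bⁿ v`, one has, for every vertex `v ≠ d`,
`⨅_{a ∈ δ⁺(v)} (x a + b^∞ (head a)) ≤ b^∞ v`. -/
theorem stmt7 {V A R : Type*} [Fintype V] [Fintype A] [DecidableEq V]
    [CompleteLattice R] [AddMonoid R]
    [CovariantClass R R (· + ·) (· ≤ ·)]
    [CovariantClass R R (Function.swap (· + ·)) (· ≤ ·)]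
    (D : Digraph' V A) (x : A → R) (d : V) :
    ∀ v : V, v ≠ d →
      (⨅ a ∈ {a : A | D.tail a = v}, (x a + ⨅ n : ℕ, bSeq D x d n (D.head a))) ≤
        ⨅ n : ℕ, bSeq D x d n v := by
  intro v hv
  apply le_iInf
  intro n
  induction n with
  | zero => simp [bSeq, hv]
  | succ n ih =>
    simp only [bSeq, if_neg hv]
    refine le_inf ih ?_
    refine le_iInf₂ fun a ha => ?_
    refine le_trans (iInf₂_le a ha) ?_
    exact add_le_add le_rfl (iInf_le _ n)
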